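/- Ultrafilters select a unique vertex in each tree (Lemma 'dual well-defined', finite case): Let a hierarchical family of trees be given, with 0-consistent set Q, and let σ be an ultrafilter on the half-spaces of Q. Then for each U ∈ 𝒰, the set of vertices of T_U lying in σ(e) for every edge e of T_U is a singleton. -/

import Mathlib

section TreeAux
open SimpleGraph
variable {α : Type*} {T : SimpleGraph α}

open SimpleGraph

variable {α : Type*} {T : SimpleGraph α}

/-- In a tree, any path realizes the distance between its endpoints. -/
lemma tree_path_length (ht : T.IsTree) {z w : α} (p : T.Walk z w) (hp : p.IsPath) :
    p.length = T.dist z w := by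
  obtain ⟨q, hq, hlen⟩ := (ht.isConnected z w).exists_path_of_dist
  have : (⟨p, hp⟩ : T.Path z w) = ⟨q, hq⟩ := ht.IsAcyclic.path_unique _ _
  rw [show p = q from congrArg Subtype.val this, hlen]

/-- First step of a geodesic. -/
lemma tree_exists_adj (hc : T.Connected) {z u : α} (h : z ≠ u) :
    ∃ a, T.Adj z a ∧ T.dist a u + 1 = T.dist z u := by
  have hne : T.dist z u ≠ 0 := fun h0 => h (hc.dist_eq_zero_iff.mp h0)
  obtain ⟨p, hlen⟩ := (hc z u).exists_walk_length_eq_dist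
  cases p with
  | nil => exact absurd rfl h
  | @cons _ a _ ha q =>
    refine ⟨a, ha, ?_⟩
    have h1 : T.dist a u ≤ q.length := SimpleGraph.dist_le q
    have h2 : T.dist z u ≤ 1 + T.dist a u := by
      have := hc.dist_triangle (v := a) (u := z) (w := u)
      have : T.dist z a ≤ 1 := by
        have := SimpleGraph.dist_le (Walk.cons ha Walk.nil)
        simpa using this
      omega
    simp only [Walk.length_cons] at hlen
    omega

/-- Lengths of the two pieces of a split walk. -/
lemma take_drop_length [DecidableEq α] {z w x : α} (p : T.Walk z w) (hx : x ∈ p.support) :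
    (p.takeUntil x hx).length + (p.dropUntil x hx).length = p.length := by
  conv_rhs => rw [← p.take_spec hx]
  rw [Walk.length_append]

/-- Adjacent vertices are at distinct distances from any vertex of a tree. -/
lemma tree_adj_dist_ne [DecidableEq α] (ht : T.IsTree) {u v : α} (huv : T.Adj u v) (z : α) :
    T.dist z u ≠ T.dist z v := by
  intro h
  obtain ⟨p, hp, hlen⟩ := (ht.isConnected z u).exists_path_of_dist
  by_cases hv : v ∈ p.support
  · have h1 : T.dist z v ≤ (p.takeUntil v hv).length := SimpleGraph.dist_le _
    have h2 : T.dist v u ≤ (p.dropUntil v hv).length := SimpleGraph.dist_le _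
    have h3 := take_drop_length p hv
    have h4 : (p.dropUntil v hv).length = 0 := by omega
    exact huv.ne' (Walk.eq_of_length_eq_zero h4)
  · have hr : (p.concat huv).IsPath := by
      rw [Walk.isPath_def, Walk.support_concat,
        List.nodup_append]
      exact ⟨hp.support_nodup, List.nodup_singleton v,
        by intro a ha b hb; simp at hb; subst hb; rintro rfl; exact hv ha⟩
    have := tree_path_length ht _ hr
    rw [Walk.length_concat] at this
    omega

/-- The edge-cut distance formula in a tree: if `z` and `w` are on opposite sides of
the edge `{u, v}`, the geodesic from `z` to `w` passes through `u` then `v`. -/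
lemma tree_cut_dist [DecidableEq α] (ht : T.IsTree) {u v z w : α} (huv : T.Adj u v)
    (hz : T.dist z u < T.dist z v) (hw : T.dist w v < T.dist w u) :
    T.dist z w = T.dist z u + 1 + T.dist v w := by
  have hc := ht.isConnected
  have hduv : T.dist u v = 1 := SimpleGraph.dist_eq_one_iff_adj.mpr huv
  have hzv : T.dist z v = T.dist z u + 1 := by
    have := hc.dist_triangle (u := z) (v := u) (w := v)
    omega
  have hwu : T.dist w u = T.dist w v + 1 := by
    have := hc.dist_triangle (u := w) (v := v) (w := u)
    rw [SimpleGraph.dist_comm (u := v) (v := u)] at this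
    omega
  obtain ⟨p, hp, hlenp⟩ := (hc z u).exists_path_of_dist
  obtain ⟨q, hq, hlenq⟩ := (hc v w).exists_path_of_dist
  have hdisj : ∀ x, x ∈ p.support → x ∈ q.support → False := by
    intro x hxp hxq
    have i1 : T.dist z x ≤ (p.takeUntil x hxp).length := SimpleGraph.dist_le _
    have i2 : T.dist x u ≤ (p.dropUntil x hxp).length := SimpleGraph.dist_le _
    have i3 := take_drop_length p hxp
    have j1 : T.dist v x ≤ (q.takeUntil x hxq).length := SimpleGraph.dist_le _
    have j2 : T.dist x w ≤ (q.dropUntil x hxq).length := SimpleGraph.dist_le _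
    have j3 := take_drop_length q hxq
    have e1 : T.dist z v ≤ T.dist z x + T.dist x v :=
      hc.dist_triangle
    have e2 : T.dist w u ≤ T.dist w x + T.dist x u :=
      hc.dist_triangle
    rw [SimpleGraph.dist_comm (u := x) (v := v)] at e1
    rw [SimpleGraph.dist_comm (u := w) (v := x)] at e2
    have e3 : T.dist w v = T.dist v w := SimpleGraph.dist_comm
    omega
  have hvp : v ∉ p.support := fun hvp => hdisj v hvp q.start_mem_support
  set r : T.Walk z w := (p.concat huv).append q with hr
  have hrpath : r.IsPath := by
    rw [Walk.isPath_def, hr, Walk.support_append, Walk.support_concat]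
    have : (v :: q.support.tail) = q.support := (q.support_eq_cons).symm
    rw [List.append_assoc, List.singleton_append,
      ← Walk.support_eq_cons, List.nodup_append]
    refine ⟨hp.support_nodup, hq.support_nodup, ?_⟩
    intro x hxp y hxq hxy
    subst hxy
    exact hdisj x hxp hxq
  have hlen : r.length = T.dist z u + 1 + T.dist v w := by
    rw [hr, Walk.length_append, Walk.length_concat, hlenp, hlenq]
  have := tree_path_length ht r hrpath
  omega

end TreeAux


/-- `a` and `b` lie in the same connected component of the tree `G` with the vertex `w`
deleted (equivalently: `a, b ≠ w` and `w` does not lie on the geodesic from `a` to `b`). -/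
def treeSameComp {α : Type*} (G : SimpleGraph α) (w a b : α) : Prop :=
  a ≠ w ∧ b ≠ w ∧ G.dist a w + G.dist w b ≠ G.dist a b

/-- `m` is the median of `a`, `b`, `c` in the tree `G`: it lies on all three
pairwise geodesics. -/
def IsTreeMedian {α : Type*} (G : SimpleGraph α) (a b c m : α) : Prop :=
  G.dist a m + G.dist m b = G.dist a b ∧
  G.dist a m + G.dist m c = G.dist a c ∧
  G.dist b m + G.dist m c = G.dist b c

/-- A hierarchical family of trees: a finite index set `Idx` of domains with relations
`⊏` (proper nesting) and `⊥` (orthogonality), a finite simplicial tree `G U` on the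
finite vertex set `Vtx U` for each domain `U`, marked vertices labeled by the finite set
`F`, and relative projection data `δup`/`δdown` satisfying coherence, bounded geodesic
image, and consistency of the marked tuples. -/
structure HFT (Idx : Type*) [Fintype Idx] (Vtx : Idx → Type*) [∀ U, Fintype (Vtx U)]
    (F : Type*) [Fintype F] where
  /-- proper nesting `⊏` -/
  pnest : Idx → Idx → Prop
  /-- orthogonality `⊥` -/
  orth : Idx → Idx → Prop
  pnest_irrefl : ∀ U, ¬ pnest U U
  pnest_trans : ∀ U V W, pnest U V → pnest V W → pnest U W
  /-- `⊏` has a unique maximal element -/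
  max_unique : ∃! m : Idx, ∀ W, ¬ pnest m W
  orth_symm : ∀ U V, orth U V → orth V U
  orth_irrefl : ∀ U, ¬ orth U U
  orth_not_pnest : ∀ U V, orth U V → ¬ pnest U V
  /-- the tree associated to each domain -/
  G : (U : Idx) → SimpleGraph (Vtx U)
  tree : ∀ U, (G U).IsTree
  /-- the marked vertex of `T_U` labeled by `f : F` -/
  mark : (U : Idx) → F → Vtx U
  /-- every leaf is marked -/
  leaf_marked : ∀ (U : Idx) (v : Vtx U),
    Set.Subsingleton {w : Vtx U | (G U).Adj v w} → ∃ f : F, mark U f = v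
  /-- the relative projection vertex `δup V U = δ^V_U ∈ T_U`
  (relevant when `V ⊏ U` or `V ⋔ U`) -/
  δup : (V U : Idx) → Vtx U
  /-- the relative projection map `δdown U V = δ^U_V : T_U → T_V` (for `V ⊏ U`) -/
  δdown : (U V : Idx) → Vtx U → Vtx V
  /-- every component of `T_U − δ^V_U` contains a marked vertex -/
  comp_marked : ∀ V U : Idx,
    (pnest V U ∨ (V ≠ U ∧ ¬ pnest V U ∧ ¬ pnest U V ∧ ¬ orth V U)) →
    ∀ a : Vtx U, a ≠ δup V U → ∃ f : F, treeSameComp (G U) (δup V U) a (mark U f)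
  /-- `δ^U_W = δ^V_W` whenever `U ⊥ V`, `V ⊏ W`, and `U ⊏ W` or `U ⋔ W` -/
  δ_coherent : ∀ U V W : Idx, orth U V → pnest V W →
    (pnest U W ∨ (U ≠ W ∧ ¬ pnest U W ∧ ¬ pnest W U ∧ ¬ orth U W)) →
    δup U W = δup V W
  /-- bounded geodesic image: `δ^U_V` is constant on each component of `T_U − δ^V_U` … -/
  bgi_const : ∀ U V : Idx, pnest V U → ∀ a b : Vtx U,
    treeSameComp (G U) (δup V U) a b → δdown U V a = δdown U V b
  /-- … with value `f̂_V` on the component containing `f̂_U` -/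
  bgi_mark : ∀ U V : Idx, pnest V U → ∀ f : F,
    mark U f ≠ δup V U → δdown U V (mark U f) = mark V f
  /-- the marked tuples are 0-consistent (transverse case) -/
  mark_consistent_t : ∀ (f : F) (U V : Idx),
    (U ≠ V ∧ ¬ pnest U V ∧ ¬ pnest V U ∧ ¬ orth U V) →
    mark U f = δup V U ∨ mark V f = δup U V
  /-- the marked tuples are 0-consistent (nested case) -/
  mark_consistent_n : ∀ (f : F) (U V : Idx), pnest V U →
    mark U f = δup V U ∨ mark V f = δdown U V (mark U f)

namespace HFT

variable {Idx : Type*} [Fintype Idx] {Vtx : Idx → Type*} [∀ U, Fintype (Vtx U)]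
  {F : Type*} [Fintype F]

/-- Transversality `U ⋔ V`: distinct, not nested either way, not orthogonal. -/
def transv (H : HFT Idx Vtx F) (U V : Idx) : Prop :=
  U ≠ V ∧ ¬ H.pnest U V ∧ ¬ H.pnest V U ∧ ¬ H.orth U V

/-- A tuple of vertices is 0-consistent. -/
def ZeroConsistent (H : HFT Idx Vtx F) (x : ∀ U, Vtx U) : Prop :=
  (∀ U V, H.transv U V → x U = H.δup V U ∨ x V = H.δup U V) ∧
  (∀ U V, H.pnest V U → x U = H.δup V U ∨ x V = H.δdown U V (x U))

/-- The set `Q` of all 0-consistent tuples. -/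
def Q (H : HFT Idx Vtx F) : Set (∀ U, Vtx U) := {x | H.ZeroConsistent x}

/-- The ℓ¹ metric on tuples: `d_Q(x, y) = Σ_U d_{T_U}(x_U, y_U)`. -/
noncomputable def dQ (H : HFT Idx Vtx F) (x y : ∀ U, Vtx U) : ℕ :=
  ∑ U : Idx, (H.G U).dist (x U) (y U)

/-- The half-tree of the edge `{u, v}` of `T_U` on the `u`-side: the vertices strictly
closer to `u` than to `v`. -/
def halfTree (H : HFT Idx Vtx F) (U : Idx) (u v : Vtx U) : Set (Vtx U) :=
  {w | (H.G U).dist w u < (H.G U).dist w v}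

/-- The half-space of `Q` determined by the half-tree of `{u, v} ⊆ T_U` on the
`u`-side. -/
def halfSpace (H : HFT Idx Vtx F) (U : Idx) (u v : Vtx U) : Set (∀ W, Vtx W) :=
  {x | x ∈ H.Q ∧ x U ∈ H.halfTree U u v}

/-- Two walls (dual to the edge `{u, v}` of `T_U` and the edge `{u', v'}` of `T_V`)
cross: all four intersections of half-spaces are nonempty. -/
def Crosses (H : HFT Idx Vtx F) (U : Idx) (u v : Vtx U) (V : Idx) (u' v' : Vtx V) :
    Prop :=
  (H.halfSpace U u v ∩ H.halfSpace V u' v').Nonempty ∧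
  (H.halfSpace U u v ∩ H.halfSpace V v' u').Nonempty ∧
  (H.halfSpace U v u ∩ H.halfSpace V u' v').Nonempty ∧
  (H.halfSpace U v u ∩ H.halfSpace V v' u').Nonempty

/-- Two walls are transverse: none of the four inclusions among their half-spaces and
complements holds. -/
def WallTransverse (H : HFT Idx Vtx F) (U : Idx) (u v : Vtx U) (V : Idx)
    (u' v' : Vtx V) : Prop :=
  ¬ (H.halfSpace U u v ⊆ H.halfSpace V u' v') ∧
  ¬ (H.halfSpace U u v ⊆ H.halfSpace V v' u') ∧
  ¬ (H.halfSpace U v u ⊆ H.halfSpace V u' v') ∧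
  ¬ (H.halfSpace U v u ⊆ H.halfSpace V v' u')

end HFT

variable {Idx : Type*} [Fintype Idx] {Vtx : Idx → Type*} [∀ U, Fintype (Vtx U)]
  {F : Type*} [Fintype F]

/-- **Ultrafilters select a unique vertex in each tree** (Lemma `dual well-defined`,
finite case). Here `σ U u v` means that the ultrafilter `σ` assigns to the edge
`{u, v}` of `T_U` its half-tree on the `u`-side. -/
theorem ultrafilter_selects_vertex (H : HFT Idx Vtx F)
    (σ : (U : Idx) → Vtx U → Vtx U → Prop)
    (hchoice : ∀ (U : Idx) (u v : Vtx U), (H.G U).Adj u v → (σ U u v ↔ ¬ σ U v u))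
    (hconsistent : ∀ (U V : Idx) (u v : Vtx U) (u' v' : Vtx V),
      (H.G U).Adj u v → (H.G V).Adj u' v' → σ U u v →
      H.halfSpace U u v ⊆ H.halfSpace V u' v' → σ V u' v') :
    ∀ U : Idx, ∃! w : Vtx U,
      ∀ u v : Vtx U, (H.G U).Adj u v → σ U u v → w ∈ H.halfTree U u v := by
  intro U
  classical
  have ht : (H.G U).IsTree := H.tree U
  have hc := ht.isConnected
  have hnonempty : Nonempty (Vtx U) := hc.nonempty
  set T := H.G U with hT
  let S : Vtx U → Finset (Vtx U × Vtx U) := fun x =>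
    Finset.univ.filter (fun e => T.Adj e.1 e.2 ∧ σ U e.1 e.2 ∧ T.dist x e.1 < T.dist x e.2)
  have step : ∀ w a, T.Adj w a → σ U a w → (S w).card < (S a).card := by
    intro w a hwa hσ
    apply Finset.card_lt_card
    have hsub : S w ⊆ S a := by
      intro e he
      simp only [S, Finset.mem_filter, Finset.mem_univ, true_and] at he ⊢
      obtain ⟨hadj, hσuv, hside⟩ := he
      refine ⟨hadj, hσuv, ?_⟩
      rcases (tree_adj_dist_ne ht hadj a).lt_or_gt with h | h
      · exact h
      exfalso
      have hcut := tree_cut_dist ht hadj hside h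
      have h1 : T.dist w a = 1 := SimpleGraph.dist_eq_one_iff_adj.mpr hwa
      have hwu : w = e.1 := hc.dist_eq_zero_iff.mp (by omega)
      have hav : e.2 = a := (hc.dist_eq_zero_iff.mp (by omega))
      rw [← hwu, hav] at hσuv
      exact (hchoice U w a hwa).mp hσuv hσ
    rw [Finset.ssubset_iff_of_subset hsub]
    refine ⟨(a, w), ?_, ?_⟩
    · simp only [S, Finset.mem_filter, Finset.mem_univ, true_and]
      exact ⟨hwa.symm, hσ, by
        rw [SimpleGraph.dist_self]
        exact hc.pos_dist_of_ne hwa.ne'⟩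
    · simp only [S, Finset.mem_filter, Finset.mem_univ, true_and]
      intro hmem
      rw [SimpleGraph.dist_self] at hmem
      omega
  obtain ⟨w, -, hmax⟩ := Finset.exists_max_image Finset.univ
    (fun x => (S x).card) Finset.univ_nonempty
  have hprop : ∀ u v : Vtx U, T.Adj u v → σ U u v → w ∈ H.halfTree U u v := by
    intro u v hadj hσuv
    simp only [HFT.halfTree, Set.mem_setOf_eq]
    rcases (tree_adj_dist_ne ht hadj w).lt_or_gt with h | h
    · exact h
    exfalso
    have hwu : w ≠ u := by
      rintro rfl
      rw [SimpleGraph.dist_self] at h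
      omega
    obtain ⟨a, hwa, hau⟩ := tree_exists_adj hc hwu
    have hduv : T.dist u v = 1 := SimpleGraph.dist_eq_one_iff_adj.mpr hadj
    have hsub : ∀ z, T.dist z u < T.dist z v → T.dist z a < T.dist z w := by
      intro z hzuv
      by_cases hau' : a = u
      · subst hau'
        have := tree_cut_dist ht hadj hzuv h
        omega
      · have haside : T.dist a v < T.dist a u := by
          rcases (tree_adj_dist_ne ht hadj a).lt_or_gt with h' | h'
          · exfalso
            have := tree_cut_dist ht hadj h' h
            have h1 : T.dist a w = 1 := SimpleGraph.dist_eq_one_iff_adj.mpr hwa.symm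
            exact hau' (hc.dist_eq_zero_iff.mp (by omega))
          · exact h'
        have h1 : T.dist w u = T.dist w v + 1 := by
          have := hc.dist_triangle (u := w) (v := v) (w := u)
          rw [SimpleGraph.dist_comm (u := v) (v := u)] at this
          omega
        have h2 : T.dist a u = T.dist a v + 1 := by
          have := hc.dist_triangle (u := a) (v := v) (w := u)
          rw [SimpleGraph.dist_comm (u := v) (v := u)] at this
          omega
        have e1 := tree_cut_dist ht hadj hzuv haside
        have e2 := tree_cut_dist ht hadj hzuv h
        have c1 : T.dist v a = T.dist a v := SimpleGraph.dist_comm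
        have c2 : T.dist v w = T.dist w v := SimpleGraph.dist_comm
        omega
    have hspace : H.halfSpace U u v ⊆ H.halfSpace U a w := by
      intro x hx
      exact ⟨hx.1, hsub _ hx.2⟩
    have hσaw : σ U a w := hconsistent U U u v a w hadj hwa.symm hσuv hspace
    exact absurd (step w a hwa hσaw) (not_lt.mpr (hmax a (Finset.mem_univ a)))
  refine ⟨w, hprop, ?_⟩
  intro w' hw'
  by_contra hne'
  obtain ⟨a, hw'a, haw⟩ := tree_exists_adj hc hne'
  by_cases hσ : σ U w' a
  · have hmem := hprop w' a hw'a hσ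
    have hlt : T.dist w w' < T.dist w a := hmem
    have c1 : T.dist w a = T.dist a w := SimpleGraph.dist_comm
    have c2 : T.dist w w' = T.dist w' w := SimpleGraph.dist_comm
    omega
  · have hσ' : σ U a w' := by
      have := hchoice U w' a hw'a
      tauto
    have hmem := hw' a w' hw'a.symm hσ'
    have hlt : T.dist w' a < T.dist w' w' := hmem
    rw [SimpleGraph.dist_self] at hlt
    omega
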